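/- Let X, Y be real normed spaces, let T : X → Y be a nonzero bounded linear operator, let A : X → Y be a bounded linear operator, and let ε ∈ [0,1). Then T ⊥_B^ε A if and only if either (a) there exists a sequence {x_n} of unit vectors in X such that ‖Tx_n‖ → ‖T‖ and lim_{n→∞} ‖Ax_n‖ ≤ ε‖A‖, or (b) there exist two sequences {x_n}, {y_n} of unit vectors in X and two sequences of positive real numbers {ε_n}, {δ_n} such that (i) ε_n → 0, δ_n → 0, ‖Tx_n‖ → ‖T‖, ‖Ty_n‖ → ‖T‖ as n → ∞; (ii) ‖Tx_n + λAx_n‖² ≥ (1 − ε_n²)‖Tx_n‖² − 2ε√(1 − ε_n²)‖Tx_n‖‖λA‖ for all λ ≥ 0 and all n; and (iii) ‖Ty_n + λAy_n‖² ≥ (1 − δ_n²)‖Ty_n‖² − 2ε√(1 − δ_n²)‖Ty_n‖‖λA‖ for all λ ≤ 0 and all n. -/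

import Mathlib

open Filter Topology

lemma algA {M u d S : ℝ} (hM : 0 < M) (hu0 : 0 ≤ u) (hu : u ≤ M/2)
    (hd : d*M = 2*u^2) (hc : 0 < M - u - d)
    (hS2 : M^2 - 2*M*u ≤ S^2) (hS0 : 0 ≤ S) : M - u - d ≤ S := by
  have hdu : d ≤ u := by nlinarith
  have hd0 : 0 ≤ d := by nlinarith
  have hsq : (M - u - d)^2 ≤ S^2 := by nlinarith
  calc M - u - d = Real.sqrt ((M - u - d)^2) := (Real.sqrt_sq hc.le).symm
    _ ≤ Real.sqrt (S^2) := Real.sqrt_le_sqrt hsq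
    _ = S := Real.sqrt_sq hS0

lemma algB {g G e2 s t : ℝ} (h : G ≤ g) (hG : 0 ≤ G) (he2 : 0 ≤ e2)
    (hst : 0 ≤ s*G*t) : (1-e2)*G^2 - 2*s*G*t ≤ g^2 := by nlinarith

lemma algC {g G e2 s t : ℝ} (hg : 0 ≤ g) (hs0 : 0 ≤ s) (hs1 : s ≤ 1)
    (hs2 : s^2 = 1-e2) (hG : 0 ≤ G) (h : G ≤ t) :
    (1-e2)*G^2 - 2*s*G*t ≤ g^2 := by
  have hsG : 0 ≤ s*G := mul_nonneg hs0 hG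
  have hsGG : s*G ≤ G := by nlinarith
  have h2 : s*G*(s*G) ≤ (s*G)*t := mul_le_mul_of_nonneg_left (le_trans hsGG h) hsG
  have h3 : 0 ≤ (s*G)*t := mul_nonneg hsG (le_trans hG h)
  nlinarith [sq_nonneg g]

lemma algD {g G e2 s t ρ : ℝ} (hg : 0 ≤ g) (hs0 : 0 ≤ s) (hs1 : s ≤ 1)
    (hs2 : s^2 = 1-e2) (hG : 0 ≤ G) (ht : 0 ≤ t) (h6 : 2*ρ ≤ G)
    (h2 : G ≤ t + ρ) : (1-e2)*G^2 - 2*s*G*t ≤ g^2 := by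
  have hG2t : G ≤ 2*t := by linarith
  have hsG : 0 ≤ s*G := mul_nonneg hs0 hG
  have hsGG : s*G ≤ G := by nlinarith
  have hh : s*G*(s*G) ≤ (s*G)*(2*t) := mul_le_mul_of_nonneg_left (le_trans hsGG hG2t) hsG
  nlinarith [sq_nonneg g]

lemma algE {g G e2 s t ρ : ℝ} (hg : 0 ≤ g) (hR : G - t - ρ ≤ g)
    (h2 : 0 < G - t - ρ) (hs2 : s^2 = 1-e2) (hsl : 1-e2 ≤ s)
    (he2h : e2 ≤ 1/2) (he2p : 0 < e2) (hG : 0 ≤ G) (ht : 0 ≤ t) (hρ : 0 ≤ ρ)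
    (h5 : 2*ρ ≤ e2*G*(1-e2)) : (1-e2)*G^2 - 2*s*G*t ≤ g^2 := by
  have hgsq : (G - t - ρ)^2 ≤ g^2 := by nlinarith
  nlinarith [sq_nonneg (t - e2*G),
    mul_nonneg (mul_nonneg hG ht) (by linarith : (0:ℝ) ≤ e2 - (1 - s)),
    mul_nonneg ht hρ, sq_nonneg ρ,
    mul_le_mul_of_nonneg_right h5 hG]

lemma algF {ρ δ e2 M G : ℝ} (k1 : 16*(ρ+δ) = e2*M) (hMG : M/2 ≤ G)
    (he2h : e2 ≤ 1/2) (he2p : 0 < e2) (hδ : 0 < δ) (hρ : 0 ≤ ρ) (hM : 0 < M) :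
    2*ρ ≤ e2*G*(1-e2) := by
  nlinarith [mul_le_mul_of_nonneg_left hMG he2p.le, mul_pos he2p hM,
    mul_nonneg (mul_nonneg he2p.le (by linarith : (0:ℝ) ≤ G)) (by linarith : (0:ℝ) ≤ 1 - e2)]

lemma norm_smul_real {E : Type*} [SeminormedAddCommGroup E] [NormedSpace ℝ E]
    (c : ℝ) (u : E) : ‖c • u‖ = |c| * ‖u‖ := by
  have := norm_smul c u
  simpa using this

lemma near_norming {X Y : Type*} [NormedAddCommGroup X] [NormedSpace ℝ X]
    [NormedAddCommGroup Y] [NormedSpace ℝ Y]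
    (S : X →L[ℝ] Y) {δ : ℝ} (hδ : 0 < δ) (v : X) (hv : ‖v‖ = 1) :
    ∃ x : X, ‖x‖ = 1 ∧ ‖S‖ - δ ≤ ‖S x‖ := by
  rcases le_or_gt ‖S‖ δ with h | h
  · exact ⟨v, hv, by have := norm_nonneg (S v); linarith⟩
  · obtain ⟨x, hx1, hx2⟩ := S.exists_lt_apply_of_lt_opNorm (r := ‖S‖ - δ) (by linarith)
    have hx0 : x ≠ 0 := by
      rintro rfl
      simp at hx2; linarith
    have hnx : 0 < ‖x‖ := norm_pos_iff.mpr hx0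
    refine ⟨‖x‖⁻¹ • x, ?_, ?_⟩
    · rw [norm_smul, norm_inv, norm_norm, inv_mul_cancel₀ hnx.ne']
    · have : ‖S (‖x‖⁻¹ • x)‖ = ‖x‖⁻¹ * ‖S x‖ := by
        rw [map_smul, norm_smul, norm_inv, norm_norm]
      rw [this]
      have h1 : ‖S x‖ ≤ ‖x‖⁻¹ * ‖S x‖ := by
        have : 1 ≤ ‖x‖⁻¹ := (one_le_inv₀ hnx).mpr hx1.le
        nlinarith [norm_nonneg (S x)]
      linarith

lemma algG {p mu G eps a k d r L gp gm : ℝ}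
    (hkey : mu*gp ≤ (mu-p)*G + p*gm)
    (hmul : mu*(G - (eps*p*a+k*p^2+d)) ≤ mu*gp)
    (hpr : p*r = p^2*a + L*(k*p^2+d))
    (hmkd : mu*(k*p^2+d) ≤ L*(k*p^2+d))
    (hpa : 0 ≤ p^2*a) : p*(G - eps*mu*a - r) ≤ p*gm := by nlinarith

lemma algH {x : ℝ} (h1 : 0 ≤ x) (h2 : x ≤ 1) : x^2 ≤ x := by nlinarith

set_option maxHeartbeats 1000000 in
lemma core {X Y : Type*} [NormedAddCommGroup X] [NormedSpace ℝ X]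
    [NormedAddCommGroup Y] [NormedSpace ℝ Y]
    (T A : X →L[ℝ] Y) (hT0 : T ≠ 0) {ε : ℝ} (hε0 : 0 ≤ ε) (hε1 : ε < 1)
    (H : ∀ l : ℝ, ‖T + l • A‖ ^ 2 ≥ ‖T‖ ^ 2 - 2 * ε * ‖T‖ * ‖l • A‖)
    (v : X) (hv : ‖v‖ = 1)
    {p δ γ κ β ρ e : ℝ} (hp : 0 < p) (hδ : 0 < δ) (hγ : 0 < γ)
    (hκ : κ = 2*ε^2*‖A‖^2/‖T‖)
    (hβ : β = ε*p*‖A‖ + κ*p^2 + δ + p*‖A‖)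
    (hρ : ρ = p*‖A‖ + (2*‖T‖/γ)*(κ*p + δ/p))
    (he : e = Real.sqrt (min (1/2) (16*(ρ+δ)/‖T‖)))
    (C1 : ε*p*‖A‖ ≤ ‖T‖/2) (C2 : β ≤ ‖T‖/2) (C3 : ρ ≤ ‖T‖/8)
    (C5 : 16*(ρ+δ)/‖T‖ ≤ 1/2) :
    ∃ x : X, ‖x‖ = 1 ∧ ‖T‖ - β ≤ ‖T x‖ ∧
      (ε*‖A‖ + γ < ‖A x‖ → ∀ l : ℝ, 0 ≤ l →
        ‖T x + l • A x‖ ^ 2 ≥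
          (1 - e^2) * ‖T x‖^2 - 2*ε*Real.sqrt (1 - e^2) * ‖T x‖ * (l * ‖A‖)) := by
  set M := ‖T‖ with hMdef
  set a := ‖A‖ with hadef
  have hM : 0 < M := norm_pos_iff.mpr hT0
  have ha : 0 ≤ a := norm_nonneg A
  have hκ0 : 0 ≤ κ := by rw [hκ]; positivity
  set S := T + p • A with hSdef
  obtain ⟨x, hx1, hx2⟩ := near_norming S hδ v hv
  have hSnn : (0:ℝ) ≤ ‖S‖ := norm_nonneg S
  -- lower bound on ‖S‖
  have hSn : M - ε*p*a - κ*p^2 ≤ ‖S‖ := by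
    have HS := H p
    have hpA : ‖p • A‖ = p * a := by
      simpa [abs_of_nonneg hp.le] using norm_smul p A
    rw [hpA] at HS
    have hκp : κ*p^2*M = 2*(ε*p*a)^2 := by rw [hκ]; field_simp
    rcases le_or_gt (M - ε*p*a - κ*p^2) 0 with hc | hc
    · linarith
    · exact algA hM (by positivity) C1 hκp hc (by linarith [HS]) hSnn
  set G := ‖T x‖ with hGdef
  have hG0 : 0 ≤ G := norm_nonneg _
  have hG1 : G ≤ M := T.unit_le_opNorm x hx1.le
  have hSx : S x = T x + p • A x := by
    simp [hSdef]
  have hAx : ‖A x‖ ≤ a := A.unit_le_opNorm x hx1.le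
  have hG2 : M - β ≤ G := by
    have h1 : ‖S x‖ ≤ G + p * ‖A x‖ := by
      rw [hSx]
      calc ‖T x + p • A x‖ ≤ ‖T x‖ + ‖p • A x‖ := norm_add_le _ _
        _ = G + p * ‖A x‖ := by
            rw [norm_smul_real, abs_of_nonneg hp.le]
    have h2 : p * ‖A x‖ ≤ p * a := mul_le_mul_of_nonneg_left hAx hp.le
    rw [hβ]; linarith [hx2]
  refine ⟨x, hx1, hG2, ?_⟩
  intro hb l hl
  set b := ‖A x‖ with hbdef
  have hbγ : γ ≤ b := by linarith [mul_nonneg hε0 ha]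
  set Λ := 2*M/γ with hΛ
  have hΛ0 : 0 < Λ := by positivity
  have hρ0 : 0 ≤ ρ := by rw [hρ]; positivity
  have hρpa : p*a ≤ ρ := by
    rw [hρ]; have : 0 ≤ (2*M/γ)*(κ*p + δ/p) := by positivity
    linarith
  -- region 1 and 2 bound
  have hreg : ∀ μ : ℝ, 0 ≤ μ → μ ≤ Λ → G - ε*μ*a - ρ ≤ ‖T x + μ • A x‖ := by
    intro μ hμ0 hμΛ
    rcases le_or_gt μ p with hc | hc
    · have h1 : G - μ * b ≤ ‖T x + μ • A x‖ := by
        have h := norm_sub_le (T x + μ • A x) (μ • A x)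
        rw [add_sub_cancel_right] at h
        rw [norm_smul_real, abs_of_nonneg hμ0] at h
        linarith
      have h2 : μ * b ≤ μ * a := mul_le_mul_of_nonneg_left hAx hμ0
      have h3 : μ * a ≤ p * a := mul_le_mul_of_nonneg_right hc ha
      have h4 : 0 ≤ ε*μ*a := by positivity
      linarith
    · have hμpos : 0 < μ := lt_trans hp hc
      have hid2 : μ • (T x + p • A x) = (μ - p) • T x + p • (T x + μ • A x) := by
        module
      have hkey : μ * ‖T x + p • A x‖ ≤ (μ - p) * G + p * ‖T x + μ • A x‖ := by
        calc μ * ‖T x + p • A x‖ = ‖μ • (T x + p • A x)‖ := by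
              rw [norm_smul_real, abs_of_nonneg hμ0]
          _ = ‖(μ - p) • T x + p • (T x + μ • A x)‖ := by rw [hid2]
          _ ≤ ‖(μ - p) • T x‖ + ‖p • (T x + μ • A x)‖ := norm_add_le _ _
          _ = (μ - p) * G + p * ‖T x + μ • A x‖ := by
              rw [norm_smul_real, norm_smul_real,
                abs_of_nonneg (by linarith : (0:ℝ) ≤ μ - p), abs_of_nonneg hp.le]
      have hgp : G - (ε*p*a + κ*p^2 + δ) ≤ ‖T x + p • A x‖ := by
        rw [← hSx]; linarith [hx2, hG1]
      have hmul : μ * (G - (ε*p*a + κ*p^2 + δ)) ≤ μ * ‖T x + p • A x‖ :=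
        mul_le_mul_of_nonneg_left hgp hμ0
      have hpρ : p*ρ = p^2*a + Λ*(κ*p^2 + δ) := by
        rw [hρ, hΛ]; field_simp
      have hμκδ : μ*(κ*p^2 + δ) ≤ Λ*(κ*p^2 + δ) :=
        mul_le_mul_of_nonneg_right hμΛ (by positivity)
      have hfin : p * (G - ε*μ*a - ρ) ≤ p * ‖T x + μ • A x‖ :=
        algG hkey hmul hpρ hμκδ (by positivity)
      exact le_of_mul_le_mul_left (by linarith) hp
  -- region 3
  have hreg3 : ∀ μ : ℝ, Λ ≤ μ → G ≤ ‖T x + μ • A x‖ := by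
    intro μ hμ
    have hμ0 : 0 ≤ μ := le_trans hΛ0.le hμ
    have h1 : μ * b - G ≤ ‖T x + μ • A x‖ := by
      have h := norm_sub_le (T x + μ • A x) (T x)
      rw [add_sub_cancel_left] at h
      rw [norm_smul_real, abs_of_nonneg hμ0] at h
      linarith
    have h2 : Λ * γ ≤ μ * b := mul_le_mul hμ hbγ hγ.le hμ0
    have h3 : Λ * γ = 2*M := by rw [hΛ]; field_simp
    linarith
  -- e facts
  set e2 := min (1/2 : ℝ) (16*(ρ+δ)/M) with he2def
  have he2v : e2 = 16*(ρ+δ)/M := min_eq_right C5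
  have he2pos : 0 < e2 := by rw [he2v]; positivity
  have he2half : e2 ≤ 1/2 := min_le_left _ _
  have heq : e^2 = e2 := by rw [he]; exact Real.sq_sqrt (le_of_lt he2pos)
  set s := Real.sqrt (1 - e^2) with hsdef
  have hs0 : 0 ≤ s := Real.sqrt_nonneg _
  have hs2 : s^2 = 1 - e2 := by rw [hsdef, heq]; exact Real.sq_sqrt (by linarith)
  have hs1 : s ≤ 1 := Real.sqrt_le_one.mpr (by rw [heq]; linarith [he2pos])
  have hsl : 1 - e2 ≤ s := by
    rw [hsdef, heq]
    exact (Real.le_sqrt (by linarith) (by linarith)).mpr (algH (by linarith) (by linarith))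
  have hMG : M/2 ≤ G := by linarith
  have h6 : 2*ρ ≤ G := by linarith
  have h5 : 2*ρ ≤ e2*G*(1-e2) := by
    have k1 : 16*(ρ+δ) = e2*M := by
      rw [he2v]; field_simp
    exact algF k1 hMG he2half he2pos hδ hρ0 hM
  -- conclude
  have hrw : 2*ε*Real.sqrt (1 - e^2) * ‖T x‖ * (l * a) = 2*s*G*(ε*l*a) := by
    rw [← hsdef, ← hGdef]; ring
  rw [ge_iff_le, heq, hrw]
  set t := ε*l*a with htdef
  have ht0 : 0 ≤ t := by positivity
  set g := ‖T x + l • A x‖ with hgdef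
  have hgnn : 0 ≤ g := norm_nonneg _
  rcases le_or_gt Λ l with hcase | hcase
  · exact algB (hreg3 l hcase) hG0 he2pos.le
      (by positivity)
  · have hR := hreg l hl hcase.le
    rcases le_or_gt G t with h1 | h1
    · exact algC hgnn hs0 hs1 hs2 hG0 h1
    · rcases le_or_gt (G - t - ρ) 0 with h2 | h2
      · exact algD hgnn hs0 hs1 hs2 hG0 ht0 h6 (by linarith)
      · exact algE hgnn hR h2 hs2 hsl he2half he2pos hG0 ht0 hρ0 h5

section
variable {X Y : Type*} [NormedAddCommGroup X] [NormedSpace ℝ X]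
    [NormedAddCommGroup Y] [NormedSpace ℝ Y]

set_option maxHeartbeats 1000000 in
lemma one_sided (T A : X →L[ℝ] Y) (hT0 : T ≠ 0) {ε : ℝ} (hε0 : 0 ≤ ε) (hε1 : ε < 1)
    (H : ∀ l : ℝ, ‖T + l • A‖ ^ 2 ≥ ‖T‖ ^ 2 - 2 * ε * ‖T‖ * ‖l • A‖) :
    (∃ x : ℕ → X, (∀ n, ‖x n‖ = 1) ∧
        Tendsto (fun n => ‖T (x n)‖) atTop (𝓝 ‖T‖) ∧
        ∃ L : ℝ, Tendsto (fun n => ‖A (x n)‖) atTop (𝓝 L) ∧ L ≤ ε * ‖A‖) ∨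
    (∃ x : ℕ → X, ∃ e : ℕ → ℝ, (∀ n, ‖x n‖ = 1) ∧ (∀ n, 0 < e n) ∧
        Tendsto e atTop (𝓝 0) ∧ Tendsto (fun n => ‖T (x n)‖) atTop (𝓝 ‖T‖) ∧
        (∀ n, ∀ l : ℝ, 0 ≤ l → ‖T (x n) + l • A (x n)‖ ^ 2 ≥
          (1 - (e n)^2) * ‖T (x n)‖^2 -
            2*ε*Real.sqrt (1 - (e n)^2) * ‖T (x n)‖ * (l * ‖A‖))) := by
  set M := ‖T‖ with hMdef
  set a := ‖A‖ with hadef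
  have hM : 0 < M := norm_pos_iff.mpr hT0
  have ha : 0 ≤ a := norm_nonneg A
  set κ := 2*ε^2*a^2/M with hκdef
  have hκ0 : 0 ≤ κ := by positivity
  -- unit vector
  obtain ⟨w, hw⟩ : ∃ w, T w ≠ 0 := by
    by_contra hc; push_neg at hc; exact hT0 (by ext z; simp [hc])
  have hw0 : w ≠ 0 := fun hz => hw (by simp [hz])
  have hnw : 0 < ‖w‖ := norm_pos_iff.mpr hw0
  set v := ‖w‖⁻¹ • w with hvdef
  have hv : ‖v‖ = 1 := by
    rw [hvdef, norm_smul, norm_inv, norm_norm, inv_mul_cancel₀ hnw.ne']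
  -- parameter sequences
  set h : ℕ → ℝ := fun n => 1/((n:ℝ)+1) with hhdef
  have hhpos : ∀ n, 0 < h n := fun n => by positivity
  have hh0 : Tendsto h atTop (𝓝 0) := tendsto_one_div_add_atTop_nhds_zero_nat
  set βf : ℕ → ℝ := fun n => ε*(h n)^2*a + κ*((h n)^2)^2 + (h n)^5 + (h n)^2*a with hβdef
  set ρf : ℕ → ℝ := fun n => (h n)^2*a + 2*M*(κ*(h n) + (h n)^2) with hρdef
  have hβpos : ∀ n, 0 < βf n := fun n => by
    have := hhpos n; positivity
  have hρpos : ∀ n, 0 ≤ ρf n := fun n => by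
    have := hhpos n; positivity
  set ef : ℕ → ℝ := fun n => Real.sqrt (min (1/2) (16*(ρf n + (h n)^5)/M)) with hedef
  have hefpos : ∀ n, 0 < ef n := fun n => by
    apply Real.sqrt_pos.mpr
    apply lt_min (by norm_num)
    have h1 := hhpos n; have h2 := hρpos n
    positivity
  -- tendsto of parameter sequences
  have hβ0 : Tendsto βf atTop (𝓝 0) := by
    have hc : Continuous (fun z : ℝ => ε*z^2*a + κ*(z^2)^2 + z^5 + z^2*a) := by continuity
    have := (hc.tendsto 0).comp hh0
    simpa [hβdef, Function.comp_def] using this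
  have hρ0 : Tendsto ρf atTop (𝓝 0) := by
    have hc : Continuous (fun z : ℝ => z^2*a + 2*M*(κ*z + z^2)) := by continuity
    have := (hc.tendsto 0).comp hh0
    simpa [hρdef, Function.comp_def] using this
  have hq0 : Tendsto (fun n => 16*(ρf n + (h n)^5)/M) atTop (𝓝 0) := by
    have h5 : Tendsto (fun n => (h n)^5) atTop (𝓝 0) := by
      have := hh0.pow 5; simpa using this
    have := ((hρ0.add h5).const_mul 16).div_const M
    simpa using this
  have hef0 : Tendsto ef atTop (𝓝 0) := by
    have hmin : Tendsto (fun n => min (1/2) (16*(ρf n + (h n)^5)/M)) atTop (𝓝 (min (1/2) 0)) :=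
      Tendsto.min tendsto_const_nhds hq0
    rw [min_eq_right (by norm_num)] at hmin
    have := hmin.sqrt
    simpa [hedef] using this
  -- eventual conditions
  have hEv : ∀ᶠ n in atTop, βf n ≤ M/2 ∧ ρf n ≤ M/8 ∧ 16*(ρf n + (h n)^5)/M ≤ 1/2 := by
    filter_upwards [hβ0.eventually_le_const (by linarith : (0:ℝ) < M/2),
      hρ0.eventually_le_const (by linarith : (0:ℝ) < M/8),
      hq0.eventually_le_const (by norm_num : (0:ℝ) < 1/2)] with n h1 h2 h3
    exact ⟨h1, h2, h3⟩
  obtain ⟨N, hN⟩ := eventually_atTop.mp hEv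
  -- apply core at shifted indices
  have hcoreall : ∀ n : ℕ, ∃ x : X, ‖x‖ = 1 ∧ M - βf (n+N) ≤ ‖T x‖ ∧
      (ε*a + h (n+N) < ‖A x‖ → ∀ l : ℝ, 0 ≤ l →
        ‖T x + l • A x‖ ^ 2 ≥
          (1 - (ef (n+N))^2) * ‖T x‖^2 -
            2*ε*Real.sqrt (1 - (ef (n+N))^2) * ‖T x‖ * (l * a)) := by
    intro n
    obtain ⟨hC2, hC3, hC5⟩ := hN (n+N) (by omega)
    have hpn := hhpos (n+N)
    have hC1 : ε*(h (n+N))^2*a ≤ M/2 := by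
      have h1 : 0 ≤ κ*((h (n+N))^2)^2 := by positivity
      have h2 : 0 ≤ (h (n+N))^5 := by positivity
      have h3 : 0 ≤ (h (n+N))^2*a := by positivity
      have := hC2
      simp only [hβdef] at this
      linarith
    exact core T A hT0 hε0 hε1 H v hv (by positivity : 0 < (h (n+N))^2)
      (by positivity : 0 < (h (n+N))^5) hpn hκdef rfl
      (by field_simp; ring) rfl hC1 hC2 hC3 hC5
  choose x hx1 hx2 hx3 using hcoreall
  -- ‖T (x n)‖ → M
  have hTup : ∀ n : ℕ, ‖T (x n)‖ ≤ M := fun n => T.unit_le_opNorm _ (hx1 n).le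
  have hβsh : Tendsto (fun n => M - βf (n+N)) atTop (𝓝 M) := by
    have := ((tendsto_add_atTop_iff_nat N).mpr hβ0).const_sub M
    simpa using this
  have hTx : Tendsto (fun n => ‖T (x n)‖) atTop (𝓝 M) :=
    tendsto_of_tendsto_of_tendsto_of_le_of_le hβsh tendsto_const_nhds
      (fun n => hx2 n) (fun n => hTup n)
  by_cases hfreq : ∃ᶠ n in atTop, ‖A (x n)‖ ≤ ε*a + h (n+N)
  · left
    obtain ⟨φ, hφ, hPφ⟩ := extraction_of_frequently_atTop hfreq
    have hu : ∀ k, ‖A (x (φ k))‖ ∈ Set.Icc (0:ℝ) a :=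
      fun k => ⟨norm_nonneg _, A.unit_le_opNorm _ (hx1 (φ k)).le⟩
    obtain ⟨L, hLmem, ψ, hψ, hLt⟩ := isCompact_Icc.tendsto_subseq hu
    refine ⟨fun k => x (φ (ψ k)), fun k => hx1 _, ?_, L, ?_, ?_⟩
    · exact hTx.comp (hφ.comp hψ).tendsto_atTop
    · exact hLt
    · have hγto : Tendsto (fun k => ε*a + h (φ (ψ k) + N)) atTop (𝓝 (ε*a + 0)) := by
        apply Tendsto.const_add
        exact hh0.comp ((tendsto_add_atTop_nat N).comp (hφ.comp hψ).tendsto_atTop)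
      have := le_of_tendsto_of_tendsto hLt hγto
        (Eventually.of_forall (fun k => hPφ (ψ k)))
      simpa using this
  · right
    rw [not_frequently] at hfreq
    push_neg at hfreq
    obtain ⟨N₂, hN₂⟩ := eventually_atTop.mp hfreq
    refine ⟨fun n => x (n+N₂), fun n => ef (n+N₂+N), fun n => hx1 _,
      fun n => hefpos _, ?_, ?_, ?_⟩
    · exact (tendsto_add_atTop_iff_nat N₂).mpr ((tendsto_add_atTop_iff_nat N).mpr hef0)
    · exact (tendsto_add_atTop_iff_nat N₂).mpr hTx
    · intro n l hl
      exact hx3 (n+N₂) (hN₂ (n+N₂) (by omega)) l hl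

end

lemma algI {N M w : ℝ} (hN0 : 0 ≤ N) (hM : 0 ≤ M) (hw : 0 ≤ w)
    (h : M - w ≤ N) : M^2 - 2*M*w ≤ N^2 := by
  rcases le_or_gt w M with hc | hc
  · nlinarith [mul_self_le_mul_self (by linarith : (0:ℝ) ≤ M - w) h, sq_nonneg w]
  · nlinarith [sq_nonneg N, mul_le_mul_of_nonneg_left hc.le hM]

set_option maxHeartbeats 1000000 in
/-- Characterization of approximate Birkhoff-James orthogonality `T ⊥_B^ε A` of
bounded linear operators between arbitrary real normed spaces, with `T ≠ 0`. -/
theorem approx_B_orth_iff_bounded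
    {X Y : Type*} [NormedAddCommGroup X] [NormedSpace ℝ X]
    [NormedAddCommGroup Y] [NormedSpace ℝ Y]
    (T A : X →L[ℝ] Y) (hT0 : T ≠ 0)
    (ε : ℝ) (hε0 : 0 ≤ ε) (hε1 : ε < 1) :
    (∀ l : ℝ, ‖T + l • A‖ ^ 2 ≥ ‖T‖ ^ 2 - 2 * ε * ‖T‖ * ‖l • A‖) ↔
      ((∃ x : ℕ → X, (∀ n, ‖x n‖ = 1) ∧
          Tendsto (fun n => ‖T (x n)‖) atTop (𝓝 ‖T‖) ∧
          ∃ L : ℝ, Tendsto (fun n => ‖A (x n)‖) atTop (𝓝 L) ∧ L ≤ ε * ‖A‖) ∨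
        (∃ x y : ℕ → X, ∃ e d : ℕ → ℝ,
          (∀ n, ‖x n‖ = 1) ∧ (∀ n, ‖y n‖ = 1) ∧
          (∀ n, 0 < e n) ∧ (∀ n, 0 < d n) ∧
          Tendsto e atTop (𝓝 0) ∧ Tendsto d atTop (𝓝 0) ∧
          Tendsto (fun n => ‖T (x n)‖) atTop (𝓝 ‖T‖) ∧
          Tendsto (fun n => ‖T (y n)‖) atTop (𝓝 ‖T‖) ∧
          (∀ n, ∀ l : ℝ, 0 ≤ l →
            ‖T (x n) + l • A (x n)‖ ^ 2 ≥
              (1 - (e n) ^ 2) * ‖T (x n)‖ ^ 2 -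
                2 * ε * Real.sqrt (1 - (e n) ^ 2) * ‖T (x n)‖ * ‖l • A‖) ∧
          (∀ n, ∀ l : ℝ, l ≤ 0 →
            ‖T (y n) + l • A (y n)‖ ^ 2 ≥
              (1 - (d n) ^ 2) * ‖T (y n)‖ ^ 2 -
                2 * ε * Real.sqrt (1 - (d n) ^ 2) * ‖T (y n)‖ * ‖l • A‖))) := by
  have hsmulA : ∀ l : ℝ, ‖l • A‖ = |l| * ‖A‖ := fun l => by
    simpa using norm_smul l A
  constructor
  · -- forward
    intro H
    rcases one_sided T A hT0 hε0 hε1 H with h1 | h1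
    · exact Or.inl h1
    have H' : ∀ l : ℝ, ‖T + l • (-A)‖ ^ 2 ≥ ‖T‖ ^ 2 - 2 * ε * ‖T‖ * ‖l • (-A)‖ := by
      intro l
      have hrw : l • (-A) = (-l) • A := by rw [smul_neg, neg_smul]
      rw [hrw]
      exact H (-l)
    rcases one_sided T (-A) hT0 hε0 hε1 H' with h2 | h2
    · obtain ⟨x, hx1, hx2, L, hx3, hx4⟩ := h2
      refine Or.inl ⟨x, hx1, hx2, L, ?_, ?_⟩
      · have : ∀ n, ‖(-A) (x n)‖ = ‖A (x n)‖ := fun n => by simp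
        simpa [this] using hx3
      · simpa using hx4
    · right
      obtain ⟨x, e, hx1, he1, he2, hx2, hx3⟩ := h1
      obtain ⟨y, d, hy1, hd1, hd2, hy2, hy3⟩ := h2
      refine ⟨x, y, e, d, hx1, hy1, he1, hd1, he2, hd2, hx2, hy2, ?_, ?_⟩
      · intro n l hl
        have := hx3 n l hl
        rwa [hsmulA l, abs_of_nonneg hl]
      · intro n l hl
        have h4 := hy3 n (-l) (by linarith)
        have h5 : (-l) • ((-A) (y n)) = l • A (y n) := by simp
        rw [h5] at h4
        have h6 : -l * ‖-A‖ = ‖l • A‖ := by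
          rw [hsmulA l, norm_neg, abs_of_nonpos hl]
        rwa [h6] at h4
  · -- backward
    rintro (⟨x, hx1, hTx, L, hAx, hLa⟩ | ⟨x, y, e, d, hx1, hy1, he1, hd1, he2, hd2, hTx, hTy, hii, hiii⟩)
    · intro l
      have hbound : ∀ n, ‖T (x n)‖ - |l| * ‖A (x n)‖ ≤ ‖T + l • A‖ := by
        intro n
        have h1 : ‖(T + l • A) (x n)‖ ≤ ‖T + l • A‖ :=
          (T + l • A).unit_le_opNorm _ (hx1 n).le
        have h3 : (T + l • A) (x n) = T (x n) + l • A (x n) := by simp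
        rw [h3] at h1
        have h2 : ‖T (x n)‖ - ‖l • A (x n)‖ ≤ ‖T (x n) + l • A (x n)‖ := by
          have h5 := norm_sub_le (T (x n) + l • A (x n)) (l • A (x n))
          rw [add_sub_cancel_right] at h5
          linarith
        have h4 : ‖l • A (x n)‖ = |l| * ‖A (x n)‖ := by
          simpa using norm_smul l (A (x n))
        linarith [h4 ▸ h2]
      have hlim : Tendsto (fun n => ‖T (x n)‖ - |l| * ‖A (x n)‖) atTop
          (𝓝 (‖T‖ - |l| * L)) := hTx.sub (hAx.const_mul |l|)
      have hge : ‖T‖ - |l| * L ≤ ‖T + l • A‖ :=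
        le_of_tendsto hlim (Filter.Eventually.of_forall hbound)
      have hL0 : ‖T‖ - ε * (|l| * ‖A‖) ≤ ‖T + l • A‖ := by
        have : |l| * L ≤ |l| * (ε * ‖A‖) :=
          mul_le_mul_of_nonneg_left hLa (abs_nonneg l)
        nlinarith
      rw [ge_iff_le, hsmulA l]
      have := algI (norm_nonneg (T + l • A)) (norm_nonneg T)
        (by positivity : (0:ℝ) ≤ ε * (|l| * ‖A‖)) hL0
      nlinarith
    · intro l
      have key : ∀ (z : ℕ → X) (c : ℕ → ℝ), (∀ n, ‖z n‖ = 1) →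
          Tendsto c atTop (𝓝 0) →
          Tendsto (fun n => ‖T (z n)‖) atTop (𝓝 ‖T‖) →
          (∀ n, (1 - (c n) ^ 2) * ‖T (z n)‖ ^ 2 -
              2 * ε * Real.sqrt (1 - (c n) ^ 2) * ‖T (z n)‖ * ‖l • A‖ ≤
              ‖T (z n) + l • A (z n)‖ ^ 2) →
          ‖T‖ ^ 2 - 2 * ε * ‖T‖ * ‖l • A‖ ≤ ‖T + l • A‖ ^ 2 := by
        intro z c hz1 hc0 hTz hzineq
        have hbnd : ∀ n, (1 - (c n) ^ 2) * ‖T (z n)‖ ^ 2 -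
            2 * ε * Real.sqrt (1 - (c n) ^ 2) * ‖T (z n)‖ * ‖l • A‖ ≤
            ‖T + l • A‖ ^ 2 := by
          intro n
          have h1 : ‖(T + l • A) (z n)‖ ≤ ‖T + l • A‖ :=
            (T + l • A).unit_le_opNorm _ (hz1 n).le
          have h3 : (T + l • A) (z n) = T (z n) + l • A (z n) := by simp
          rw [h3] at h1
          have h2 : ‖T (z n) + l • A (z n)‖ ^ 2 ≤ ‖T + l • A‖ ^ 2 :=
            pow_le_pow_left₀ (norm_nonneg _) h1 2
          linarith [hzineq n]
        have hA1 : Tendsto (fun n => 1 - (c n) ^ 2) atTop (𝓝 1) := by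
          have h' := (hc0.pow 2).const_sub 1
          simpa using h'
        have hA2 : Tendsto (fun n => Real.sqrt (1 - (c n) ^ 2)) atTop (𝓝 1) := by
          have := hA1.sqrt
          simpa using this
        have hlim : Tendsto (fun n => (1 - (c n) ^ 2) * ‖T (z n)‖ ^ 2 -
            2 * ε * Real.sqrt (1 - (c n) ^ 2) * ‖T (z n)‖ * ‖l • A‖) atTop
            (𝓝 (‖T‖ ^ 2 - 2 * ε * ‖T‖ * ‖l • A‖)) := by
          have h1 := hA1.mul (hTz.pow 2)
          have h2 := ((hA2.const_mul (2 * ε)).mul hTz).mul_const ‖l • A‖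
          have h3 := h1.sub h2
          have h5 : ‖T‖ ^ 2 - 2 * ε * ‖T‖ * ‖l • A‖ =
              1 * ‖T‖ ^ 2 - 2 * ε * 1 * ‖T‖ * ‖l • A‖ := by ring
          rw [h5]
          exact Tendsto.congr (fun n => by ring) h3
        exact le_of_tendsto hlim (Filter.Eventually.of_forall hbnd)
      rcases le_or_gt 0 l with hl | hl
      · exact key x e hx1 he2 hTx (fun n => hii n l hl)
      · exact key y d hy1 hd2 hTy (fun n => hiii n l hl.le)
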